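/- For every integer n ≥ 2, one has m_n(n−1) = 2 (and consequently ⌈log₂ m_n(n−1)⌉ = 1, so that 3n − 2 + ⌈log₂ m_n(n−1)⌉ = 3n − 1). -/

import Mathlib

/-- `mfun n k` is the function `m_n(k)` defined recursively by `m_n(0) = n` and
`m_n(k+1) = ⌈m_n(k)/8⌉ + n − (k+1)`, where `⌈a/8⌉ = (a+7)/8` for naturals. -/
def mfun (n : ℕ) : ℕ → ℕ
  | 0 => n
  | k + 1 => (mfun n k + 7) / 8 + (n - (k + 1))

lemma mfun_le (n : ℕ) : ∀ k, k ≤ n - 1 → mfun n k ≤ 2 * (n - k) := by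
  intro k
  induction k with
  | zero => intro _; simp [mfun]; omega
  | succ k ih =>
    intro hk
    have h1 : k ≤ n - 1 := by omega
    have h2 := ih h1
    simp only [mfun]
    omega

lemma mfun_key (n : ℕ) (hn : 2 ≤ n) : mfun n (n - 1) = 2 := by
  have hb : 1 ≤ mfun n (n - 2) := by
    rcases Nat.lt_or_ge n 3 with h | h
    · have hn2 : n = 2 := by omega
      subst hn2; simp [mfun]
    · have : n - 2 = (n - 3) + 1 := by omega
      rw [this]
      simp only [mfun]
      omega
  have hub : mfun n (n - 2) ≤ 4 := by
    have := mfun_le n (n - 2) (by omega)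
    have : 2 * (n - (n - 2)) = 4 := by omega
    omega
  have h1 : n - 1 = (n - 2) + 1 := by omega
  rw [h1]
  simp only [mfun]
  omega

/-- For every integer `n ≥ 2`, one has `m_n(n−1) = 2` (and consequently
`⌈log₂ m_n(n−1)⌉ = 1`, so that `3n − 2 + ⌈log₂ m_n(n−1)⌉ = 3n − 1`). -/
theorem stmt_1 (n : ℕ) (hn : 2 ≤ n) :
    mfun n (n - 1) = 2 ∧ Nat.clog 2 (mfun n (n - 1)) = 1 ∧
      3 * n - 2 + Nat.clog 2 (mfun n (n - 1)) = 3 * n - 1 := by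
  have h := mfun_key n hn
  rw [h]
  have hc : Nat.clog 2 2 = 1 := by exact Nat.clog_eq_one (le_refl 2) (le_refl 2)
  rw [hc]
  omega
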